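/- Let N be a positive natural number, let J₁, J₂, J₃ be Hermitian complex matrices (of some size d×d) with J₁² + J₂² + J₃² = (N/2)·(N/2 + 1)·I, and let ψ ∈ ℂ^d be a unit vector. Define the real 3×3 matrix F by F_{il} = 4(Re⟨J_iJ_l⟩_ψ − ⟨J_i⟩_ψ⟨J_l⟩_ψ), and assume F is positive definite. Then tr(F⁻¹) ≥ 9/(N² + 2N). -/

import Mathlib

open Matrix

open Matrix Finset in
theorem trace_inv_bound (n : ℕ) (F : Matrix (Fin n) (Fin n) ℝ) (h : F.PosDef) :
    (n : ℝ)^2 ≤ F.trace * F⁻¹.trace := by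
  classical
  have hH := h.1
  set U : Matrix (Fin n) (Fin n) ℝ := (hH.eigenvectorUnitary : Matrix (Fin n) (Fin n) ℝ) with hUdef
  set lam := hH.eigenvalues with hlam
  have hU1 : star U * U = 1 := Matrix.mem_unitaryGroup_iff'.mp hH.eigenvectorUnitary.2
  have hU2 : U * star U = 1 := Matrix.mem_unitaryGroup_iff.mp hH.eigenvectorUnitary.2
  have hspec : F = U * diagonal (RCLike.ofReal ∘ lam) * star U := hH.spectral_theorem
  have hpos : ∀ i, 0 < lam i := h.eigenvalues_pos
  have hDcast : (diagonal (RCLike.ofReal ∘ lam) : Matrix (Fin n) (Fin n) ℝ) = diagonal lam := by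
    simp [RCLike.ofReal]
  rw [hDcast] at hspec
  have hinv : F⁻¹ = U * diagonal (lam⁻¹) * star U := by
    apply Matrix.inv_eq_left_inv
    rw [hspec]
    calc U * diagonal lam⁻¹ * star U * (U * diagonal lam * star U)
        = U * (diagonal lam⁻¹ * (star U * U) * diagonal lam) * star U := by
          noncomm_ring
      _ = 1 := by
          rw [hU1, mul_one, diagonal_mul_diagonal]
          have h1 : (fun i => lam⁻¹ i * lam i) = fun _ => (1:ℝ) := by
            funext i; simp [inv_mul_cancel₀ (hpos i).ne']
          rw [h1, diagonal_one, mul_one, hU2]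
  have htrF : F.trace = ∑ i, lam i := by
    rw [hspec, Matrix.trace_mul_cycle, hU1, one_mul, trace_diagonal]
  have htrFi : F⁻¹.trace = ∑ i, (lam i)⁻¹ := by
    rw [hinv, Matrix.trace_mul_cycle, hU1, one_mul, trace_diagonal]
    simp
  rw [htrF, htrFi]
  have hcs := Finset.sum_mul_sq_le_sq_mul_sq Finset.univ
    (fun i => Real.sqrt (lam i)) (fun i => (Real.sqrt (lam i))⁻¹)
  have h1 : ∀ i : Fin n, Real.sqrt (lam i) * (Real.sqrt (lam i))⁻¹ = 1 := fun i =>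
    mul_inv_cancel₀ (Real.sqrt_ne_zero'.mpr (hpos i))
  simp only [h1] at hcs
  have h2 : ∀ i : Fin n, Real.sqrt (lam i) ^ 2 = lam i := fun i =>
    Real.sq_sqrt (hpos i).le
  have h3 : ∀ i : Fin n, ((Real.sqrt (lam i))⁻¹) ^ 2 = (lam i)⁻¹ := fun i => by
    rw [inv_pow, h2]
  simp only [h2, h3, Finset.sum_const, Finset.card_univ, Fintype.card_fin, nsmul_eq_mul,
    mul_one] at hcs
  calc (n : ℝ)^2 = (∑ _i : Fin n, (1:ℝ))^2 := by simp
    _ ≤ (∑ i, lam i) * ∑ i, (lam i)⁻¹ := by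
        simpa using hcs


/-- The expectation value `⟨A⟩_ψ = ⟨ψ, A ψ⟩` of a matrix `A` in the state `ψ`. -/
noncomputable def expVal {d : ℕ} (ψ : Fin d → ℂ) (A : Matrix (Fin d) (Fin d) ℂ) : ℂ :=
  star ψ ⬝ᵥ (A *ᵥ ψ)

/-- If the Hermitian generators satisfy the spin-`N/2` Casimir identity
`J₁² + J₂² + J₃² = (N/2)(N/2+1)·I` and `ψ` is a unit vector, then the quantum Fisher
information matrix `F_{il} = 4(Re⟨J_i J_l⟩ − ⟨J_i⟩⟨J_l⟩)`, assumed positive definite,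
satisfies `tr(F⁻¹) ≥ 9/(N² + 2N)`. -/
theorem qcrb_lower_bound {d : ℕ} (N : ℕ) (hN : 0 < N)
    (J : Fin 3 → Matrix (Fin d) (Fin d) ℂ) (hJ : ∀ i, (J i).IsHermitian)
    (hCas : J 0 ^ 2 + J 1 ^ 2 + J 2 ^ 2
      = ((((N : ℝ) / 2) * ((N : ℝ) / 2 + 1) : ℝ) : ℂ) • (1 : Matrix (Fin d) (Fin d) ℂ))
    (ψ : Fin d → ℂ) (hψ : star ψ ⬝ᵥ ψ = 1)
    (F : Matrix (Fin 3) (Fin 3) ℝ)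
    (hF : ∀ i l, F i l =
      4 * ((expVal ψ (J i * J l)).re - (expVal ψ (J i)).re * (expVal ψ (J l)).re))
    (hFpd : F.PosDef) :
    (F⁻¹).trace ≥ 9 / ((N : ℝ) ^ 2 + 2 * N) := by
  set c : ℝ := ((N : ℝ) / 2) * ((N : ℝ) / 2 + 1) with hc
  -- sum of ⟨Jᵢ²⟩ equals c
  have hsum : expVal ψ (J 0 * J 0) + expVal ψ (J 1 * J 1) + expVal ψ (J 2 * J 2) = (c : ℂ) := by
    have : expVal ψ (J 0 ^ 2 + J 1 ^ 2 + J 2 ^ 2) = (c : ℂ) := by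
      rw [hCas]
      simp [expVal, smul_mulVec, one_mulVec, dotProduct_smul, hψ]
    simpa [expVal, pow_two, add_mulVec, dotProduct_add] using this
  -- trace bound
  have htr : F.trace ≤ (N:ℝ)^2 + 2*N := by
    have h0 : F.trace = F 0 0 + F 1 1 + F 2 2 := by
      simp [Matrix.trace, Fin.sum_univ_three, Matrix.diag]
    have hre : (expVal ψ (J 0 * J 0)).re + (expVal ψ (J 1 * J 1)).re
        + (expVal ψ (J 2 * J 2)).re = c := by
      have := congrArg Complex.re hsum
      simpa using this
    rw [h0, hF 0 0, hF 1 1, hF 2 2]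
    nlinarith [sq_nonneg ((expVal ψ (J 0)).re), sq_nonneg ((expVal ψ (J 1)).re),
      sq_nonneg ((expVal ψ (J 2)).re), sq_nonneg ((N:ℝ))]
  have htrpos : 0 < F.trace := by
    have h00 : ∀ i : Fin 3, 0 < F i i := by
      intro i
      have := hFpd.dotProduct_mulVec_pos (x := Pi.single i 1) (by simp [Function.ne_iff])
      simpa [dotProduct, Matrix.mulVec, Pi.single_apply, Finset.sum_ite_eq] using this
    have h0 : F.trace = F 0 0 + F 1 1 + F 2 2 := by
      simp [Matrix.trace, Fin.sum_univ_three, Matrix.diag]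
    rw [h0]; have := h00 0; have := h00 1; have := h00 2; linarith
  have hcs : (9:ℝ) ≤ F.trace * F⁻¹.trace := by
    have := trace_inv_bound 3 F hFpd
    norm_num at this
    linarith
  have hNpos : (0:ℝ) < (N:ℝ)^2 + 2*N := by positivity
  rw [ge_iff_le, div_le_iff₀ hNpos]
  have hinvpos : 0 < F⁻¹.trace := by
    nlinarith
  nlinarith
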